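/- The behavior policy μ* reduces variance step-wise compared with on-policy evaluation: for every time step t and every state s, Var(G^PDIS(τ^{μ*_{t:T−1}}_{t:T−1}) | S_t = s) ≤ Var(G^PDIS(τ^{π_{t:T−1}}_{t:T−1}) | S_t = s), where the left-hand variance is over trajectories generated by μ* from s and the right-hand variance is over trajectories generated by π from s (for which all importance ratios equal 1). -/

import Mathlib

open Finset

section MDPDefs

variable {S A : Type} [Fintype S] [Fintype A]

/-- State value `v_{π,t}(s)` of policy `π` for reward `r`, with `n` remaining steps at
time `t`; the paper's `v_{π,t}(s)` (horizon `T`) is `vval p r π (T − t) t s`. -/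
noncomputable def vval (p : S → A → S → ℝ) (r : S → A → ℝ) (π : ℕ → S → A → ℝ) :
    ℕ → ℕ → S → ℝ
  | 0, _, _ => 0
  | n + 1, t, s => ∑ a, π t s a * (r s a + ∑ s', p s a s' * vval p r π n (t + 1) s')

/-- Action value `q_{π,t}(s,a) = r(s,a) + ∑_{s'} p(s'|s,a) v_{π,t+1}(s')`, where `n`
steps remain after the current one; the paper's `q_{π,t}` is `qval p r π (T − t − 1) t`. -/
noncomputable def qval (p : S → A → S → ℝ) (r : S → A → ℝ) (π : ℕ → S → A → ℝ)
    (n t : ℕ) (s : S) (a : A) : ℝ :=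
  r s a + ∑ s', p s a s' * vval p r π n (t + 1) s'

/-- `ν_{π,t}(s,a) = Var_{s' ∼ p(·|s,a)}(v_{π,t+1}(s'))`, with `n = T − t − 1`
remaining steps after the current one (in particular `ν_{π,T−1} ≡ 0` since `v_{π,T} ≡ 0`). -/
noncomputable def nuVar (p : S → A → S → ℝ) (r : S → A → ℝ) (π : ℕ → S → A → ℝ)
    (n t : ℕ) (s : S) (a : A) : ℝ :=
  (∑ s', p s a s' * (vval p r π n (t + 1) s') ^ 2)
    - (∑ s', p s a s' * vval p r π n (t + 1) s') ^ 2

/-- Probability, under behavior policy `μ`, of the trajectory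
`τ = (A_t, S_{t+1}, A_{t+1}, …, S_{t+n})` of `n` steps starting from state `s` at
time `t`: actions `A_k ∼ μ_k(·|S_k)` and states `S_{k+1} ∼ p(·|S_k, A_k)`. -/
noncomputable def trajProb (p : S → A → S → ℝ) (μ : ℕ → S → A → ℝ) :
    (n : ℕ) → ℕ → S → (Fin n → A × S) → ℝ
  | 0, _, _, _ => 1
  | n + 1, t, s, τ =>
      μ t s (τ 0).1 * p s (τ 0).1 (τ 0).2 *
        trajProb p μ n (t + 1) (τ 0).2 (fun i => τ i.succ)

/-- PDIS return `G^PDIS(τ^{μ_{t:t+n−1}}_{t:t+n−1}) = ∑_{k=t}^{t+n−1} (∏_{j=t}^{k} ρ_j) R_{k+1}`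
(in its equivalent recursive form) along trajectory `τ` from state `s` at time `t`,
where `ρ_j = π_j(A_j|S_j)/μ_j(A_j|S_j)` and `R_{k+1} = r(S_k, A_k)`. -/
noncomputable def pdis (r : S → A → ℝ) (π μ : ℕ → S → A → ℝ) :
    (n : ℕ) → ℕ → S → (Fin n → A × S) → ℝ
  | 0, _, _, _ => 0
  | n + 1, t, s, τ =>
      π t s (τ 0).1 / μ t s (τ 0).1 *
        (r s (τ 0).1 + pdis r π μ n (t + 1) (τ 0).2 (fun i => τ i.succ))

/-- Conditional expectation `E[f(τ) | S_t = s]` over `n`-step trajectories generated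
by the behavior policy `μ` from state `s` at time `t`. -/
noncomputable def expTraj (p : S → A → S → ℝ) (μ : ℕ → S → A → ℝ) (n t : ℕ) (s : S)
    (f : (Fin n → A × S) → ℝ) : ℝ :=
  ∑ τ : Fin n → A × S, trajProb p μ n t s τ * f τ

/-- Conditional variance `Var(G^PDIS(τ^{μ_{t:T−1}}_{t:T−1}) | S_t = s)` with
`n = T − t` remaining steps. -/
noncomputable def pdisVar (p : S → A → S → ℝ) (r : S → A → ℝ) (π μ : ℕ → S → A → ℝ)
    (n t : ℕ) (s : S) : ℝ :=
  expTraj p μ n t s (fun τ => (pdis r π μ n t s τ) ^ 2)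
    - (expTraj p μ n t s (pdis r π μ n t s)) ^ 2

/-- Conditional variance `Var(G^PDIS(τ^{μ_{t+1:T−1}}_{t+1:T−1}) | S_t = s, A_t = a)`,
where `S_{t+1} ∼ p(·|s,a)` and then the trajectory is generated by `μ` from `S_{t+1}`;
here `n = T − t − 1`. -/
noncomputable def pdisVarSA (p : S → A → S → ℝ) (r : S → A → ℝ) (π μ : ℕ → S → A → ℝ)
    (n t : ℕ) (s : S) (a : A) : ℝ :=
  (∑ s', p s a s' * expTraj p μ n (t + 1) s' (fun τ => (pdis r π μ n (t + 1) s' τ) ^ 2))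
    - (∑ s', p s a s' * expTraj p μ n (t + 1) s' (pdis r π μ n (t + 1) s')) ^ 2

/-- Extended reward `r̃_t(s,a)` (horizon `T`) computed with continuation behavior
policy `μ`: `r̃_{T−1}(s,a) = r(s,a)²`, and for `t ≤ T−2`,
`r̃_t(s,a) = ν_{π,t}(s,a) + q_{π,t}(s,a)² + ∑_{s'} p(s'|s,a) Var(G^PDIS(τ^{μ_{t+1:T−1}}) | S_{t+1} = s')`. -/
noncomputable def rtilde (p : S → A → S → ℝ) (r : S → A → ℝ) (π μ : ℕ → S → A → ℝ)
    (T t : ℕ) (s : S) (a : A) : ℝ :=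
  if t + 1 = T then (r s a) ^ 2
  else
    nuVar p r π (T - t - 1) t s a + (qval p r π (T - t - 1) t s a) ^ 2
      + ∑ s', p s a s' * pdisVar p r π μ (T - t - 1) (t + 1) s'

/-- Total (unconditional) variance `Var(G^PDIS(τ^{μ_{0:T−1}}_{0:T−1}))` of the PDIS
estimator, including the randomness of the initial state `S_0 ∼ p0`. -/
noncomputable def pdisTotalVar (p : S → A → S → ℝ) (r : S → A → ℝ) (π μ : ℕ → S → A → ℝ)
    (p0 : S → ℝ) (T : ℕ) : ℝ :=
  (∑ s, p0 s * expTraj p μ T 0 s (fun τ => (pdis r π μ T 0 s τ) ^ 2))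
    - (∑ s, p0 s * expTraj p μ T 0 s (pdis r π μ T 0 s)) ^ 2

/-- Feasible set of the step-wise constrained problem at time `t` and state `s`:
probability distributions `ν` on `A` satisfying the coverage condition
`ν a = 0 → π_t(a|s) q_{π,t}(s,a) = 0` and the safety constraint
`∑ a, ν a * q^c_{μ*,t}(s,a) ≤ (1 + ε) v^c_{π,t}(s)`. -/
noncomputable def stepFeasible (p : S → A → S → ℝ) (r c : S → A → ℝ)
    (π μstar : ℕ → S → A → ℝ) (T : ℕ) (ε : ℝ) (t : ℕ) (s : S) : Set (A → ℝ) :=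
  {ν | (∀ a, 0 ≤ ν a) ∧ (∑ a, ν a) = 1 ∧
    (∀ a, ν a = 0 → π t s a * qval p r π (T - t - 1) t s a = 0) ∧
    (∑ a, ν a * qval p c μstar (T - t - 1) t s a) ≤ (1 + ε) * vval p c π (T - t) t s}

/-- Objective `∑_{a : ν a > 0} π_t(a|s)² r̃_t(s,a) / ν a` of the step-wise constrained
problem at time `t` and state `s`, where `r̃_t` is computed with continuation policy
`μ*_{t+1:T−1}`. -/
noncomputable def stepObj (p : S → A → S → ℝ) (r : S → A → ℝ) (π μstar : ℕ → S → A → ℝ)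
    (T t : ℕ) (s : S) (ν : A → ℝ) : ℝ :=
  ∑ a ∈ Finset.univ.filter (fun a => 0 < ν a),
    (π t s a) ^ 2 * rtilde p r π μstar T t s a / ν a

end MDPDefs

section AuxLemmas

variable {S A : Type} [Fintype S] [Fintype A]

private lemma sum_fin_succ_pi (n : ℕ) (f : (Fin (n + 1) → A × S) → ℝ) :
    ∑ τ : Fin (n + 1) → A × S, f τ
      = ∑ x : A × S, ∑ τ : Fin n → A × S, f (Fin.cons x τ) := by
  rw [← Equiv.sum_comp (Fin.consEquiv fun _ : Fin (n + 1) => A × S) f,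
    Fintype.sum_prod_type]
  rfl

private lemma expTraj_succ (p : S → A → S → ℝ) (μ : ℕ → S → A → ℝ) (n t : ℕ) (s : S)
    (f : (Fin (n + 1) → A × S) → ℝ) :
    expTraj p μ (n + 1) t s f
      = ∑ x : A × S, μ t s x.1 * p s x.1 x.2 *
          expTraj p μ n (t + 1) x.2 (fun τ => f (Fin.cons x τ)) := by
  unfold expTraj
  rw [sum_fin_succ_pi]
  refine Finset.sum_congr rfl fun x _ => ?_
  rw [Finset.mul_sum]
  refine Finset.sum_congr rfl fun τ _ => ?_
  simp only [trajProb, Fin.cons_zero, Fin.cons_succ]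
  ring

private lemma expTraj_mul_add (p : S → A → S → ℝ) (μ : ℕ → S → A → ℝ) (n t : ℕ) (s : S)
    (K C : ℝ) (g : (Fin n → A × S) → ℝ) :
    expTraj p μ n t s (fun τ => K * (C + g τ))
      = K * (C * (∑ τ : Fin n → A × S, trajProb p μ n t s τ) + expTraj p μ n t s g) := by
  have h : ∀ τ : Fin n → A × S, trajProb p μ n t s τ * (K * (C + g τ))
      = K * C * trajProb p μ n t s τ + K * (trajProb p μ n t s τ * g τ) := fun τ => by ring
  simp only [expTraj, h]
  rw [Finset.sum_add_distrib, ← Finset.mul_sum, ← Finset.mul_sum]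
  ring

private lemma expTraj_mul_add_sq (p : S → A → S → ℝ) (μ : ℕ → S → A → ℝ) (n t : ℕ) (s : S)
    (K C : ℝ) (g : (Fin n → A × S) → ℝ) :
    expTraj p μ n t s (fun τ => (K * (C + g τ)) ^ 2)
      = K ^ 2 * (C ^ 2 * (∑ τ : Fin n → A × S, trajProb p μ n t s τ)
          + 2 * C * expTraj p μ n t s g
          + expTraj p μ n t s (fun τ => (g τ) ^ 2)) := by
  have h : ∀ τ : Fin n → A × S, trajProb p μ n t s τ * (K * (C + g τ)) ^ 2
      = K ^ 2 * C ^ 2 * trajProb p μ n t s τ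
        + 2 * K ^ 2 * C * (trajProb p μ n t s τ * g τ)
        + K ^ 2 * (trajProb p μ n t s τ * (g τ) ^ 2) := fun τ => by ring
  simp only [expTraj, h]
  rw [Finset.sum_add_distrib, Finset.sum_add_distrib, ← Finset.mul_sum, ← Finset.mul_sum,
    ← Finset.mul_sum]
  ring

private lemma trajProb_sum_one (p : S → A → S → ℝ) (μ : ℕ → S → A → ℝ) (T : ℕ)
    (hp1 : ∀ s a, ∑ s', p s a s' = 1)
    (hμ1 : ∀ k, k < T → ∀ s, ∑ a, μ k s a = 1) :
    ∀ n t, t + n ≤ T → ∀ s : S, ∑ τ : Fin n → A × S, trajProb p μ n t s τ = 1 := by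
  intro n
  induction n with
  | zero =>
      intro t _ s
      simp [trajProb]
  | succ n ih =>
      intro t ht s
      rw [sum_fin_succ_pi]
      have h1 : ∀ x : A × S,
          ∑ τ : Fin n → A × S, trajProb p μ (n + 1) t s (Fin.cons x τ)
            = μ t s x.1 * p s x.1 x.2 := by
        intro x
        have : ∀ τ : Fin n → A × S, trajProb p μ (n + 1) t s (Fin.cons x τ)
            = μ t s x.1 * p s x.1 x.2 * trajProb p μ n (t + 1) x.2 τ := by
          intro τ
          simp only [trajProb, Fin.cons_zero, Fin.cons_succ]
        rw [Finset.sum_congr rfl fun τ _ => this τ, ← Finset.mul_sum,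
          ih (t + 1) (by omega) x.2, mul_one]
      rw [Finset.sum_congr rfl fun x _ => h1 x, Fintype.sum_prod_type]
      have h2 : ∀ a : A, ∑ s' : S, μ t s a * p s a s' = μ t s a := by
        intro a
        rw [← Finset.mul_sum, hp1 s a, mul_one]
      rw [Finset.sum_congr rfl fun a _ => h2 a]
      exact hμ1 t (by omega) s

/-- Unbiasedness of PDIS under a covering behavior policy. -/
private lemma expTraj_pdis_eq (p : S → A → S → ℝ) (r : S → A → ℝ)
    (π μ : ℕ → S → A → ℝ) (T : ℕ)
    (hp1 : ∀ s a, ∑ s', p s a s' = 1)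
    (hμ1 : ∀ k, k < T → ∀ s, ∑ a, μ k s a = 1)
    (hcov : ∀ k, k < T → ∀ s a, μ k s a = 0 →
      π k s a * qval p r π (T - k - 1) k s a = 0) :
    ∀ n t, t + n = T → ∀ s : S,
      expTraj p μ n t s (pdis r π μ n t s) = vval p r π n t s := by
  intro n
  induction n with
  | zero =>
      intro t _ s
      simp [expTraj, pdis, vval]
  | succ n ih =>
      intro t hTt s
      rw [expTraj_succ]
      have hx : ∀ x : A × S,
          expTraj p μ n (t + 1) x.2 (fun τ => pdis r π μ (n + 1) t s (Fin.cons x τ))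
            = π t s x.1 / μ t s x.1 * (r s x.1 + vval p r π n (t + 1) x.2) := by
        intro x
        have heq : (fun τ : Fin n → A × S => pdis r π μ (n + 1) t s (Fin.cons x τ))
            = fun τ => π t s x.1 / μ t s x.1 * (r s x.1 + pdis r π μ n (t + 1) x.2 τ) := by
          funext τ
          simp only [pdis, Fin.cons_zero, Fin.cons_succ]
        rw [heq, expTraj_mul_add, trajProb_sum_one p μ T hp1 hμ1 n (t + 1) (by omega),
          ih (t + 1) (by omega) x.2, mul_one]
      rw [Finset.sum_congr rfl fun x _ => by rw [hx x], Fintype.sum_prod_type]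
      have key : ∀ a : A,
          ∑ s' : S, μ t s a * p s a s'
              * (π t s a / μ t s a * (r s a + vval p r π n (t + 1) s'))
            = π t s a * (r s a + ∑ s', p s a s' * vval p r π n (t + 1) s') := by
        intro a
        by_cases hμ0 : μ t s a = 0
        · have hq := hcov t (by omega) s a hμ0
          have hn : T - t - 1 = n := by omega
          rw [hn] at hq
          unfold qval at hq
          simp [hμ0, hq]
        · have h1 : ∀ s' : S, μ t s a * p s a s'
              * (π t s a / μ t s a * (r s a + vval p r π n (t + 1) s'))
              = μ t s a * (π t s a / μ t s a)
                  * (p s a s' * r s a + p s a s' * vval p r π n (t + 1) s') := fun s' => by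
            ring
          rw [Finset.sum_congr rfl fun s' _ => h1 s', ← Finset.mul_sum,
            mul_div_cancel₀ _ hμ0, Finset.sum_add_distrib, ← Finset.sum_mul, hp1 s a,
            one_mul]
        
      rw [Finset.sum_congr rfl fun a _ => key a]
      simp only [vval]

/-- Second-moment identity: the conditional second moment of the PDIS return equals
the `r̃`-weighted importance-sampling objective. -/
private lemma expTraj_pdis_sq_eq (p : S → A → S → ℝ) (r : S → A → ℝ)
    (π μ : ℕ → S → A → ℝ) (T : ℕ)
    (hp1 : ∀ s a, ∑ s', p s a s' = 1)
    (hμ1 : ∀ k, k < T → ∀ s, ∑ a, μ k s a = 1)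
    (hcov : ∀ k, k < T → ∀ s a, μ k s a = 0 →
      π k s a * qval p r π (T - k - 1) k s a = 0)
    (n t : ℕ) (hTt : t + (n + 1) = T) (s : S) :
    expTraj p μ (n + 1) t s (fun τ => (pdis r π μ (n + 1) t s τ) ^ 2)
      = ∑ a, μ t s a * (π t s a / μ t s a) ^ 2 * rtilde p r π μ T t s a := by
  rw [expTraj_succ]
  have hx : ∀ x : A × S,
      expTraj p μ n (t + 1) x.2 (fun τ => (pdis r π μ (n + 1) t s (Fin.cons x τ)) ^ 2)
        = (π t s x.1 / μ t s x.1) ^ 2 * ((r s x.1) ^ 2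
            + 2 * r s x.1 * vval p r π n (t + 1) x.2
            + expTraj p μ n (t + 1) x.2
                (fun τ => (pdis r π μ n (t + 1) x.2 τ) ^ 2)) := by
    intro x
    have heq : (fun τ : Fin n → A × S => (pdis r π μ (n + 1) t s (Fin.cons x τ)) ^ 2)
        = fun τ => (π t s x.1 / μ t s x.1
            * (r s x.1 + pdis r π μ n (t + 1) x.2 τ)) ^ 2 := by
      funext τ
      simp only [pdis, Fin.cons_zero, Fin.cons_succ]
    rw [heq, expTraj_mul_add_sq, trajProb_sum_one p μ T hp1 hμ1 n (t + 1) (by omega),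
      expTraj_pdis_eq p r π μ T hp1 hμ1 hcov n (t + 1) (by omega) x.2, mul_one]
  rw [Finset.sum_congr rfl fun x _ => by rw [hx x], Fintype.sum_prod_type]
  refine Finset.sum_congr rfl fun a _ => ?_
  set K := π t s a / μ t s a with hK
  set M : S → ℝ := fun s' =>
    expTraj p μ n (t + 1) s' (fun τ => (pdis r π μ n (t + 1) s' τ) ^ 2) with hM
  set v : S → ℝ := fun s' => vval p r π n (t + 1) s' with hv
  have h1 : ∀ s' : S, μ t s a * p s a s'
      * (K ^ 2 * ((r s a) ^ 2 + 2 * r s a * v s' + M s'))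
      = μ t s a * K ^ 2 * (r s a) ^ 2 * p s a s'
        + μ t s a * K ^ 2 * (2 * r s a) * (p s a s' * v s')
        + μ t s a * K ^ 2 * (p s a s' * M s') := fun s' => by ring
  rw [Finset.sum_congr rfl fun s' _ => h1 s', Finset.sum_add_distrib,
    Finset.sum_add_distrib, ← Finset.mul_sum, ← Finset.mul_sum, ← Finset.mul_sum,
    hp1 s a]
  unfold rtilde
  by_cases hend : t + 1 = T
  · have hn0 : n = 0 := by omega
    subst hn0
    have hv0 : ∀ s', v s' = 0 := fun s' => by simp [hv, vval]
    have hM0 : ∀ s', M s' = 0 := fun s' => by simp [hM, expTraj, pdis]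
    simp only [if_pos hend, hv0, hM0]
    simp
  · have hn : T - t - 1 = n := by omega
    simp only [if_neg hend, hn]
    have hVar : ∀ s' : S, pdisVar p r π μ n (t + 1) s' = M s' - (v s') ^ 2 := by
      intro s'
      unfold pdisVar
      rw [expTraj_pdis_eq p r π μ T hp1 hμ1 hcov n (t + 1) (by omega) s']
    have h2 : ∀ s' : S, p s a s' * pdisVar p r π μ n (t + 1) s'
        = p s a s' * M s' - p s a s' * (v s') ^ 2 := fun s' => by rw [hVar s']; ring
    rw [Finset.sum_congr rfl fun s' _ => h2 s', Finset.sum_sub_distrib]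
    unfold nuVar qval
    ring

private lemma vval_nonneg (p : S → A → S → ℝ) (c : S → A → ℝ) (π : ℕ → S → A → ℝ)
    (hp0 : ∀ s a s', 0 ≤ p s a s') (hc : ∀ s a, 0 ≤ c s a)
    (hπ0 : ∀ t s a, 0 ≤ π t s a) :
    ∀ n t (s : S), 0 ≤ vval p c π n t s := by
  intro n
  induction n with
  | zero => intro t s; simp [vval]
  | succ n ih =>
      intro t s
      unfold vval
      refine Finset.sum_nonneg fun a _ => mul_nonneg (hπ0 t s a) ?_
      refine add_nonneg (hc s a) (Finset.sum_nonneg fun s' _ => ?_)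
      exact mul_nonneg (hp0 s a s') (ih (t + 1) s')

end AuxLemmas

/-- **Step-wise variance reduction of the safety-constrained optimal behavior policy.**
In the constrained MDP, fix a safety parameter `ε ≥ 0` and let `μ*` be the behavior
policy defined backward in time: for each `t` and `s`, `μ*_t(·|s)` is an optimal
solution of the step-wise constrained problem (minimize
`∑_{a : ν a > 0} π_t(a|s)² r̃_t(s,a) / ν a` subject to the simplex, coverage, and
safety constraints). Then `μ*` reduces variance step-wise compared with on-policy
evaluation: for every time step `t` and every state `s`,
`Var(G^PDIS(τ^{μ*_{t:T−1}}) | S_t = s) ≤ Var(G^PDIS(τ^{π_{t:T−1}}) | S_t = s)`. -/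
theorem stepwise_variance_reduction
    {S A : Type} [Fintype S] [Fintype A]
    (T : ℕ) (hT : 1 ≤ T)
    (p : S → A → S → ℝ) (r c : S → A → ℝ) (π μstar : ℕ → S → A → ℝ)
    (hp : ∀ s a, (∀ s', 0 ≤ p s a s') ∧ (∑ s', p s a s') = 1)
    (hπ : ∀ t s, (∀ a, 0 ≤ π t s a) ∧ (∑ a, π t s a) = 1)
    (hc : ∀ s a, 0 ≤ c s a)
    (ε : ℝ) (hε : 0 ≤ ε)
    (hopt : ∀ t, t < T → ∀ s,
      μstar t s ∈ stepFeasible p r c π μstar T ε t s ∧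
      ∀ ν ∈ stepFeasible p r c π μstar T ε t s,
        stepObj p r π μstar T t s (μstar t s) ≤ stepObj p r π μstar T t s ν) :
    ∀ t, t < T → ∀ s : S,
      pdisVar p r π μstar (T - t) t s ≤ pdisVar p r π π (T - t) t s := by
  have hp0 : ∀ s a s', 0 ≤ p s a s' := fun s a => (hp s a).1
  have hp1 : ∀ s a, ∑ s', p s a s' = 1 := fun s a => (hp s a).2
  have hπ0 : ∀ t s a, 0 ≤ π t s a := fun t s => (hπ t s).1
  have hπ1 : ∀ k, k < T → ∀ s, ∑ a, π k s a = 1 := fun k _ s => (hπ k s).2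
  have hμfeas : ∀ t, t < T → ∀ s : S, (∀ a, 0 ≤ μstar t s a) ∧ (∑ a, μstar t s a) = 1 ∧
      (∀ a, μstar t s a = 0 → π t s a * qval p r π (T - t - 1) t s a = 0) ∧
      (∑ a, μstar t s a * qval p c μstar (T - t - 1) t s a)
        ≤ (1 + ε) * vval p c π (T - t) t s := fun t ht s => (hopt t ht s).1
  have hμ0 : ∀ k, k < T → ∀ s a, 0 ≤ μstar k s a := fun k hk s => (hμfeas k hk s).1
  have hμ1 : ∀ k, k < T → ∀ s, ∑ a, μstar k s a = 1 := fun k hk s => (hμfeas k hk s).2.1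
  have hcovμ : ∀ k, k < T → ∀ s a, μstar k s a = 0 →
      π k s a * qval p r π (T - k - 1) k s a = 0 :=
    fun k hk s => (hμfeas k hk s).2.2.1
  have hcovπ : ∀ k, k < T → ∀ s a, π k s a = 0 →
      π k s a * qval p r π (T - k - 1) k s a = 0 := by
    intro k _ s a h0
    rw [h0, zero_mul]
  -- cost comparison: v^c_{μ*,t} ≤ (1+ε) v^c_{π,t}
  have hvc : ∀ n t, t + n = T → ∀ s : S,
      vval p c μstar n t s ≤ (1 + ε) * vval p c π n t s := by
    intro n t hn s
    cases n with
    | zero => simp [vval]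
    | succ m =>
        have ht : t < T := by omega
        have hsafe := (hμfeas t ht s).2.2.2
        have h1 : T - t - 1 = m := by omega
        have h2 : T - t = m + 1 := by omega
        rw [h1, h2] at hsafe
        calc vval p c μstar (m + 1) t s
            = ∑ a, μstar t s a * qval p c μstar m t s a := by
              simp only [vval, qval]
          _ ≤ (1 + ε) * vval p c π (m + 1) t s := hsafe
  -- main backward induction
  suffices H : ∀ n t, t + n = T → ∀ s : S,
      pdisVar p r π μstar n t s ≤ pdisVar p r π π n t s by
    intro t ht s
    exact H (T - t) t (by omega) s
  intro n
  induction n with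
  | zero =>
      intro t _ s
      simp [pdisVar, expTraj, pdis]
  | succ n ih =>
      intro t hTt s
      have ht : t < T := by omega
      have hn : T - t - 1 = n := by omega
      -- rtilde comparison from the induction hypothesis
      have hrt : ∀ a, rtilde p r π μstar T t s a ≤ rtilde p r π π T t s a := by
        intro a
        unfold rtilde
        by_cases hend : t + 1 = T
        · simp [hend]
        · simp only [if_neg hend, hn]
          refine add_le_add le_rfl (Finset.sum_le_sum fun s' _ => ?_)
          exact mul_le_mul_of_nonneg_left (ih (t + 1) (by omega) s') (hp0 s a s')
      -- feasibility of π at (t, s)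
      have hπfeas : π t s ∈ stepFeasible p r c π μstar T ε t s := by
        refine ⟨hπ0 t s, (hπ t s).2, fun a h0 => by rw [h0, zero_mul], ?_⟩
        have hvmc : ∀ s' : S, vval p c μstar (T - t - 1) (t + 1) s'
            ≤ (1 + ε) * vval p c π (T - t - 1) (t + 1) s' := by
          intro s'
          by_cases hend : t + 1 = T
          · have : T - t - 1 = 0 := by omega
            rw [this]
            simp [vval]
          · exact hvc (T - t - 1) (t + 1) (by omega) s'
        have hq : ∀ a, π t s a * qval p c μstar (T - t - 1) t s a
            ≤ (1 + ε) * (π t s a * qval p c π (T - t - 1) t s a) := by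
          intro a
          have hvcπ : 0 ≤ vval p c π (T - t - 1) (t + 1) := by
            intro s'
            exact vval_nonneg p c π hp0 hc hπ0 _ _ s'
          have hqle : qval p c μstar (T - t - 1) t s a
              ≤ (1 + ε) * qval p c π (T - t - 1) t s a := by
            unfold qval
            have h1 : ∑ s', p s a s' * vval p c μstar (T - t - 1) (t + 1) s'
                ≤ (1 + ε) * ∑ s', p s a s' * vval p c π (T - t - 1) (t + 1) s' := by
              rw [Finset.mul_sum]
              refine Finset.sum_le_sum fun s' _ => ?_
              calc p s a s' * vval p c μstar (T - t - 1) (t + 1) s'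
                  ≤ p s a s' * ((1 + ε) * vval p c π (T - t - 1) (t + 1) s') :=
                    mul_le_mul_of_nonneg_left (hvmc s') (hp0 s a s')
                _ = (1 + ε) * (p s a s' * vval p c π (T - t - 1) (t + 1) s') := by ring
            have h2 : c s a ≤ (1 + ε) * c s a := by nlinarith [hc s a]
            calc c s a + ∑ s', p s a s' * vval p c μstar (T - t - 1) (t + 1) s'
                ≤ (1 + ε) * c s a
                    + (1 + ε) * ∑ s', p s a s' * vval p c π (T - t - 1) (t + 1) s' :=
                  add_le_add h2 h1
              _ = (1 + ε) * (c s a + ∑ s', p s a s' * vval p c π (T - t - 1) (t + 1) s') := by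
                  ring
          calc π t s a * qval p c μstar (T - t - 1) t s a
              ≤ π t s a * ((1 + ε) * qval p c π (T - t - 1) t s a) :=
                mul_le_mul_of_nonneg_left hqle (hπ0 t s a)
            _ = (1 + ε) * (π t s a * qval p c π (T - t - 1) t s a) := by ring
        calc ∑ a, π t s a * qval p c μstar (T - t - 1) t s a
            ≤ ∑ a, (1 + ε) * (π t s a * qval p c π (T - t - 1) t s a) :=
              Finset.sum_le_sum fun a _ => hq a
          _ = (1 + ε) * ∑ a, π t s a * qval p c π (T - t - 1) t s a := by
              rw [Finset.mul_sum]
          _ = (1 + ε) * vval p c π (T - t) t s := by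
              have h2 : T - t = (T - t - 1) + 1 := by omega
              rw [h2]
              simp only [vval, qval, Nat.add_sub_cancel]
      -- second moments and unbiasedness
      have e1 := expTraj_pdis_eq p r π μstar T hp1 hμ1 hcovμ (n + 1) t hTt s
      have e2 := expTraj_pdis_eq p r π π T hp1 hπ1 hcovπ (n + 1) t hTt s
      have m1 := expTraj_pdis_sq_eq p r π μstar T hp1 hμ1 hcovμ n t hTt s
      have m2 := expTraj_pdis_sq_eq p r π π T hp1 hπ1 hcovπ n t hTt s
      unfold pdisVar
      rw [e1, e2, m1, m2]
      refine sub_le_sub_right ?_ _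
      -- chain through the step objective
      have step1 : ∑ a, μstar t s a * (π t s a / μstar t s a) ^ 2
            * rtilde p r π μstar T t s a
          = stepObj p r π μstar T t s (μstar t s) := by
        unfold stepObj
        rw [Finset.sum_filter]
        refine Finset.sum_congr rfl fun a _ => ?_
        by_cases hpos : 0 < μstar t s a
        · rw [if_pos hpos]
          have hne : μstar t s a ≠ 0 := ne_of_gt hpos
          field_simp
        · rw [if_neg hpos]
          have h0 : μstar t s a = 0 := le_antisymm (not_lt.mp hpos) (hμ0 t ht s a)
          simp [h0]
      have step2 : stepObj p r π μstar T t s (μstar t s)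
          ≤ stepObj p r π μstar T t s (π t s) := (hopt t ht s).2 (π t s) hπfeas
      have step3 : stepObj p r π μstar T t s (π t s)
          ≤ ∑ a, π t s a * (π t s a / π t s a) ^ 2 * rtilde p r π π T t s a := by
        unfold stepObj
        rw [Finset.sum_filter]
        refine Finset.sum_le_sum fun a _ => ?_
        by_cases hpos : 0 < π t s a
        · rw [if_pos hpos]
          have hne : π t s a ≠ 0 := ne_of_gt hpos
          have hL : π t s a ^ 2 * rtilde p r π μstar T t s a / π t s a
              = π t s a * rtilde p r π μstar T t s a := by
            field_simp
          have hR : π t s a * (π t s a / π t s a) ^ 2 * rtilde p r π π T t s a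
              = π t s a * rtilde p r π π T t s a := by
            rw [div_self hne]
            ring
          rw [hL, hR]
          exact mul_le_mul_of_nonneg_left (hrt a) (le_of_lt hpos)
        · rw [if_neg hpos]
          have h0 : π t s a = 0 := le_antisymm (not_lt.mp hpos) (hπ0 t s a)
          simp [h0]
      calc ∑ a, μstar t s a * (π t s a / μstar t s a) ^ 2 * rtilde p r π μstar T t s a
          = stepObj p r π μstar T t s (μstar t s) := step1
        _ ≤ stepObj p r π μstar T t s (π t s) := step2
        _ ≤ ∑ a, π t s a * (π t s a / π t s a) ^ 2 * rtilde p r π π T t s a := step3
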